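/- Let λ, d, β, a, p1, p2, c1, c2, b1, b2, q, h be positive real numbers, let A := c2·(λ − d·q) − b2·β, and assume A > 0 and D := A² − 4·β·c2·q·d·b2 ≥ 0. Define x2 := (A − √D)/(2·β·c2·q), x1 := λ/(d + β·x2), x5 := (x2·c2·(β·q − a) + b2·β)/(c2·p2·x2), x3 := h·x5/(c2·q·x2), and x4 := 0. Then (x1, x2, x3, x4, x5) is an equilibrium of the unforced (u ≡ 0) HIV dynamics; that is, all five right-hand sides vanish at this point: λ − d·x1 − β·x1·x2 = 0, β·x1·x2 − a·x2 − p1·x4·x2 − p2·x5·x2 = 0, c2·x1·x2·x3 − c2·q·x2·x3 − b2·x3 = 0, c1·x2·x4 − b1·x4 = 0, and c2·q·x2·x3 − h·x5 = 0. -/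

import Mathlib

/-- The recovery steady state `(x1, x2, x3, x4, x5)` is an equilibrium of the
unforced (`u ≡ 0`) HIV dynamics: all five right-hand sides vanish. -/
theorem hiv_recovery_steady_state_equilibrium
    (lam d β a p1 p2 c1 c2 b1 b2 q h : ℝ)
    (hlam : 0 < lam) (hd : 0 < d) (hβ : 0 < β) (ha : 0 < a)
    (hp1 : 0 < p1) (hp2 : 0 < p2) (hc1 : 0 < c1) (hc2 : 0 < c2)
    (hb1 : 0 < b1) (hb2 : 0 < b2) (hq : 0 < q) (hh : 0 < h)
    (A D x1 x2 x3 x4 x5 : ℝ)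
    (hA : A = c2 * (lam - d * q) - b2 * β)
    (hApos : 0 < A)
    (hD : D = A ^ 2 - 4 * β * c2 * q * d * b2)
    (hDnonneg : 0 ≤ D)
    (hx2 : x2 = (A - Real.sqrt D) / (2 * β * c2 * q))
    (hx1 : x1 = lam / (d + β * x2))
    (hx5 : x5 = (x2 * c2 * (β * q - a) + b2 * β) / (c2 * p2 * x2))
    (hx3 : x3 = h * x5 / (c2 * q * x2))
    (hx4 : x4 = 0) :
    lam - d * x1 - β * x1 * x2 = 0 ∧
    β * x1 * x2 - a * x2 - p1 * x4 * x2 - p2 * x5 * x2 = 0 ∧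
    c2 * x1 * x2 * x3 - c2 * q * x2 * x3 - b2 * x3 = 0 ∧
    c1 * x2 * x4 - b1 * x4 = 0 ∧
    c2 * q * x2 * x3 - h * x5 = 0 := by
  set s := Real.sqrt D with hs
  have hs0 : 0 ≤ s := Real.sqrt_nonneg D
  have hs2 : s ^ 2 = D := Real.sq_sqrt hDnonneg
  have hposc : (0:ℝ) < 4 * β * c2 * q * d * b2 := by positivity
  have hDltA2 : D < A ^ 2 := by linarith
  have hsltA : s < A := by nlinarith
  have hk : (2 * β * c2 * q) ≠ 0 := by positivity
  have hkx : (2 * β * c2 * q) * x2 = A - s := by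
    rw [hx2]; field_simp
  have hkx2 : ((2 * β * c2 * q) * x2) ^ 2 = (A - s) ^ 2 := by rw [hkx]
  have hx2pos : 0 < x2 := by
    rw [hx2]; exact div_pos (by linarith) (by positivity)
  have hquad4 : 4 * β * c2 * q * (β * c2 * q * x2 ^ 2 - A * x2 + d * b2) = 0 := by
    linear_combination hkx2 - 2 * A * hkx + hs2 + hD
  have hquad : β * c2 * q * x2 ^ 2 - A * x2 + d * b2 = 0 :=
    (mul_eq_zero.mp hquad4).resolve_left (by positivity)
  have hden1 : (0:ℝ) < d + β * x2 := by positivity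
  have hx1eq : x1 * (d + β * x2) = lam := by
    rw [hx1]; exact div_mul_cancel₀ lam (ne_of_gt hden1)
  have e1 : lam - d * x1 - β * x1 * x2 = 0 := by linear_combination -hx1eq
  have hkey : c2 * x1 * x2 - c2 * q * x2 - b2 = 0 := by
    have h2 : (c2 * x1 * x2 - c2 * q * x2 - b2) * (d + β * x2) = 0 := by
      have hh2 : (c2 * x1 * x2 - c2 * q * x2 - b2) * (d + β * x2)
          = c2 * x2 * (x1 * (d + β * x2)) - (c2 * q * x2 + b2) * (d + β * x2) := by ring
      rw [hh2, hx1eq]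
      linear_combination -hquad - x2 * hA
    rcases mul_eq_zero.mp h2 with h' | h'
    · exact h'
    · linarith
  have hc2' : c2 ≠ 0 := ne_of_gt hc2
  have hp2' : p2 ≠ 0 := ne_of_gt hp2
  have hq' : q ≠ 0 := ne_of_gt hq
  have hx2' : x2 ≠ 0 := ne_of_gt hx2pos
  have e5 : c2 * q * x2 * x3 - h * x5 = 0 := by
    rw [hx3]; field_simp; ring
  have hx5eq : p2 * x5 * x2 = x2 * (β * q - a) + b2 * β / c2 := by
    rw [hx5]; field_simp
  have e2 : β * x1 * x2 - a * x2 - p1 * x4 * x2 - p2 * x5 * x2 = 0 := by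
    rw [hx4, hx5eq]
    have hh3 : β * x1 * x2 - a * x2 - p1 * 0 * x2 - (x2 * (β * q - a) + b2 * β / c2)
        = (β / c2) * (c2 * x1 * x2 - c2 * q * x2 - b2) := by field_simp; ring
    rw [hh3, hkey, mul_zero]
  refine ⟨e1, e2, ?_, ?_, e5⟩
  · have hh4 : c2 * x1 * x2 * x3 - c2 * q * x2 * x3 - b2 * x3
        = x3 * (c2 * x1 * x2 - c2 * q * x2 - b2) := by ring
    rw [hh4, hkey, mul_zero]
  · rw [hx4]; ring
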